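/- Let G be an n×n Hermitian positive definite complex matrix. Define a matrix H indexed by the 2-element subsets of {1,…,n} by H_{{i,j},{k,l}} := G_{ik}·G_{jl} + G_{il}·G_{jk} (which is well defined, being symmetric under exchanging i with j and under exchanging k with l). Then H is Hermitian and positive definite. (The Gram matrix G^{(2)} of 2-magnon states, which is the restriction of G ⊗ G to the symmetric subspace, is positive definite whenever G^{(1)} is.) -/

import Mathlib

open scoped ComplexOrder
open Finset Matrix
open scoped MatrixOrder

private lemma pair_sum_aux' {n : ℕ} (f : {P : Finset (Fin n) // P.card = 2} → ℂ) :
    ∑ i : Fin n, ∑ j : Fin n,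
      (if h : i ≠ j then f ⟨{i, j}, Finset.card_pair h⟩ else 0)
      = 2 * ∑ P : {P : Finset (Fin n) // P.card = 2}, f P := by
  classical
  set f' : Finset (Fin n) → ℂ := fun t => if h : t.card = 2 then f ⟨t, h⟩ else 0 with hf'
  have h1 : ∑ i : Fin n, ∑ j : Fin n,
      (if h : i ≠ j then f ⟨{i, j}, Finset.card_pair h⟩ else 0)
      = ∑ p ∈ (Finset.univ : Finset (Fin n)).offDiag, f' {p.1, p.2} := by
    rw [← Finset.sum_product']
    rw [← Finset.sum_subset
      (fun p _ => Finset.mem_product.mpr ⟨Finset.mem_univ _, Finset.mem_univ _⟩ :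
        (Finset.univ : Finset (Fin n)).offDiag ⊆ Finset.univ ×ˢ Finset.univ)
      ?_]
    · apply Finset.sum_congr rfl
      intro p hp
      have hne : p.1 ≠ p.2 := (Finset.mem_offDiag.mp hp).2.2
      rw [dif_pos hne, hf']
      simp only
      rw [dif_pos (Finset.card_pair hne)]
    · intro p _ hp
      have heq : p.1 = p.2 := by
        by_contra hne
        exact hp (Finset.mem_offDiag.mpr ⟨Finset.mem_univ _, Finset.mem_univ _, hne⟩)
      rw [dif_neg]
      simp [heq]
  have h3 := Finset.sum_comp (s := (Finset.univ : Finset (Fin n)).offDiag) f'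
    (fun p : Fin n × Fin n => ({p.1, p.2} : Finset (Fin n)))
  rw [h1, h3]
  have himg : ((Finset.univ : Finset (Fin n)).offDiag).image
      (fun p : Fin n × Fin n => ({p.1, p.2} : Finset (Fin n)))
      = Finset.powersetCard 2 Finset.univ := by
    ext t
    simp only [Finset.mem_image, Finset.mem_powersetCard, Finset.mem_offDiag]
    constructor
    · rintro ⟨p, ⟨-, -, hne⟩, rfl⟩
      exact ⟨Finset.subset_univ _, Finset.card_pair hne⟩
    · rintro ⟨-, ht⟩
      obtain ⟨a, b, hab, rfl⟩ := Finset.card_eq_two.mp ht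
      exact ⟨(a, b), ⟨Finset.mem_univ _, Finset.mem_univ _, hab⟩, rfl⟩
  rw [himg]
  have hfib : ∀ t ∈ Finset.powersetCard 2 (Finset.univ : Finset (Fin n)),
      #{p ∈ (Finset.univ : Finset (Fin n)).offDiag |
        (fun p : Fin n × Fin n => ({p.1, p.2} : Finset (Fin n))) p = t} = 2 := by
    intro t ht
    obtain ⟨a, b, hab, rfl⟩ := Finset.card_eq_two.mp (Finset.mem_powersetCard.mp ht).2
    have hset : {p ∈ (Finset.univ : Finset (Fin n)).offDiag |
          (fun p : Fin n × Fin n => ({p.1, p.2} : Finset (Fin n))) p = {a, b}}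
        = ({(a, b), (b, a)} : Finset (Fin n × Fin n)) := by
      ext p
      simp only [Finset.mem_filter, Finset.mem_offDiag, Finset.mem_insert, Finset.mem_singleton,
        Finset.mem_univ, true_and]
      constructor
      · rintro ⟨hne, hpair⟩
        have hp2 : ({p.1, p.2} : Set (Fin n)) = {a, b} := by
          have := congrArg (fun (s : Finset (Fin n)) => (s : Set (Fin n))) hpair
          simpa using this
        rcases Set.pair_eq_pair_iff.mp hp2 with ⟨h1', h2'⟩ | ⟨h1', h2'⟩
        · left; exact Prod.ext h1' h2'
        · right; exact Prod.ext h1' h2'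
      · rintro (rfl | rfl)
        · exact ⟨hab, rfl⟩
        · exact ⟨hab.symm, Finset.pair_comm _ _⟩
    rw [hset, Finset.card_pair (by simp [Prod.ext_iff, hab])]
  rw [Finset.sum_congr rfl (fun t ht => by rw [hfib t ht])]
  have h2 : ∑ t ∈ Finset.powersetCard 2 (Finset.univ : Finset (Fin n)), f' t
      = ∑ P : {P : Finset (Fin n) // P.card = 2}, f P := by
    rw [Finset.sum_subtype (p := fun t : Finset (Fin n) => t.card = 2)
      (Finset.powersetCard 2 Finset.univ)
      (fun t => ⟨fun h => (Finset.mem_powersetCard.mp h).2,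
        fun h => Finset.mem_powersetCard.mpr ⟨Finset.subset_univ _, h⟩⟩) f']
    exact Finset.sum_congr rfl fun P _ => by
      rw [hf']; simp only; rw [dif_pos P.2]
  rw [← h2]
  rw [Finset.mul_sum]
  exact Finset.sum_congr rfl fun t _ => by push_cast [nsmul_eq_mul]; norm_num

theorem symmetric_square_posDef
    {n : ℕ} (G : Matrix (Fin n) (Fin n) ℂ) (hG : G.PosDef)
    (H : Matrix {P : Finset (Fin n) // P.card = 2} {P : Finset (Fin n) // P.card = 2} ℂ)
    (hH : ∀ (i j k l : Fin n) (hij : i ≠ j) (hkl : k ≠ l),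
      H ⟨{i, j}, Finset.card_pair hij⟩ ⟨{k, l}, Finset.card_pair hkl⟩
        = G i k * G j l + G i l * G j k) :
    H.PosDef := by
  classical
  have hGc : ∀ a b, star (G a b) = G b a := by
    intro a b
    rw [← Matrix.conjTranspose_apply, hG.isHermitian.eq]
  refine Matrix.PosDef.of_dotProduct_mulVec_pos ?_ ?_
  · -- Hermitian
    ext P Q
    obtain ⟨Pv, hP⟩ := P
    obtain ⟨Qv, hQ⟩ := Q
    obtain ⟨i, j, hij, rfl⟩ := Finset.card_eq_two.mp hP
    obtain ⟨k, l, hkl, rfl⟩ := Finset.card_eq_two.mp hQ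
    rw [Matrix.conjTranspose_apply]
    have e1 : (⟨{i, j}, hP⟩ : {P : Finset (Fin n) // P.card = 2})
        = ⟨{i, j}, Finset.card_pair hij⟩ := rfl
    have e2 : (⟨{k, l}, hQ⟩ : {P : Finset (Fin n) // P.card = 2})
        = ⟨{k, l}, Finset.card_pair hkl⟩ := rfl
    rw [e1, e2, hH i j k l hij hkl, hH k l i j hkl hij]
    simp only [star_add, star_mul', hGc]
    ring
  · -- positivity
    intro x hx
    set S : Matrix (Fin n) (Fin n) ℂ :=
      Matrix.of fun k l => if h : k ≠ l then x ⟨{k, l}, Finset.card_pair h⟩ else 0 with hSdef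
    have hSapply : ∀ k l (h : k ≠ l), S k l = x ⟨{k, l}, Finset.card_pair h⟩ := by
      intro k l h
      simp only [hSdef, Matrix.of_apply, dif_pos h]
    have hSdiag : ∀ k l, k = l → S k l = 0 := by
      intro k l h
      simp only [hSdef, Matrix.of_apply, dif_neg (not_not.mpr h)]
    have hSsymm : ∀ k l, S l k = S k l := by
      intro k l
      by_cases h : k ≠ l
      · rw [hSapply k l h, hSapply l k (Ne.symm h)]
        congr 1
        exact Subtype.ext (Finset.pair_comm l k)
      · push_neg at h
        rw [hSdiag _ _ h, hSdiag _ _ h.symm]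
    have hSne : S ≠ 0 := by
      intro hS0
      apply hx
      funext P
      obtain ⟨Pv, hP⟩ := P
      obtain ⟨k, l, hkl, rfl⟩ := Finset.card_eq_two.mp hP
      have : S k l = 0 := by rw [hS0]; rfl
      rw [hSapply k l hkl] at this
      exact this
    -- the quadratic form as a quadruple sum
    have step1 : star x ⬝ᵥ H *ᵥ x
        = ∑ P : {P : Finset (Fin n) // P.card = 2}, ∑ Q, star (x P) * (H P Q * x Q) := by
      simp [dotProduct, Matrix.mulVec, Finset.mul_sum]
    set A1 : ℂ := ∑ i : Fin n, ∑ j : Fin n, ∑ k : Fin n, ∑ l : Fin n,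
      star (S i j) * (G i k * (S k l * G j l)) with hA1def
    have step2 : ∑ i : Fin n, ∑ j : Fin n, ∑ k : Fin n, ∑ l : Fin n,
        star (S i j) * ((G i k * G j l + G i l * G j k) * S k l)
        = 4 * ∑ P : {P : Finset (Fin n) // P.card = 2}, ∑ Q, star (x P) * (H P Q * x Q) := by
      have inner : ∀ i j : Fin n, ∑ k : Fin n, ∑ l : Fin n,
          star (S i j) * ((G i k * G j l + G i l * G j k) * S k l)
          = if h : i ≠ j then
              2 * ∑ Q, star (x ⟨{i, j}, Finset.card_pair h⟩)
                * (H ⟨{i, j}, Finset.card_pair h⟩ Q * x Q)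
            else 0 := by
        intro i j
        by_cases hij : i ≠ j
        · rw [dif_pos hij]
          rw [← pair_sum_aux' (fun Q => star (x ⟨{i, j}, Finset.card_pair hij⟩)
            * (H ⟨{i, j}, Finset.card_pair hij⟩ Q * x Q))]
          apply Finset.sum_congr rfl
          intro k _
          apply Finset.sum_congr rfl
          intro l _
          by_cases hkl : k ≠ l
          · rw [dif_pos hkl, hSapply i j hij, hSapply k l hkl, hH i j k l hij hkl]
          · push_neg at hkl
            rw [dif_neg (not_not.mpr hkl), hSdiag k l hkl]
            ring
        · push_neg at hij
          rw [dif_neg (not_not.mpr hij)]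
          simp [hSdiag i j hij]
      calc ∑ i : Fin n, ∑ j : Fin n, ∑ k : Fin n, ∑ l : Fin n,
          star (S i j) * ((G i k * G j l + G i l * G j k) * S k l)
          = ∑ i : Fin n, ∑ j : Fin n, (if h : i ≠ j then
              2 * ∑ Q, star (x ⟨{i, j}, Finset.card_pair h⟩)
                * (H ⟨{i, j}, Finset.card_pair h⟩ Q * x Q)
            else 0) := by
            exact Finset.sum_congr rfl fun i _ => Finset.sum_congr rfl fun j _ => inner i j
        _ = 2 * ∑ P : {P : Finset (Fin n) // P.card = 2},
              2 * ∑ Q, star (x P) * (H P Q * x Q) :=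
            pair_sum_aux' (fun P => 2 * ∑ Q, star (x P) * (H P Q * x Q))
        _ = 4 * ∑ P : {P : Finset (Fin n) // P.card = 2},
              ∑ Q, star (x P) * (H P Q * x Q) := by
            rw [← Finset.mul_sum]; ring
    have step3 : ∑ i : Fin n, ∑ j : Fin n, ∑ k : Fin n, ∑ l : Fin n,
        star (S i j) * ((G i k * G j l + G i l * G j k) * S k l) = 2 * A1 := by
      have split : ∑ i : Fin n, ∑ j : Fin n, ∑ k : Fin n, ∑ l : Fin n,
          star (S i j) * ((G i k * G j l + G i l * G j k) * S k l)
          = A1 + ∑ i : Fin n, ∑ j : Fin n, ∑ k : Fin n, ∑ l : Fin n,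
              star (S i j) * (G i l * (S k l * G j k)) := by
        rw [hA1def, ← Finset.sum_add_distrib]
        apply Finset.sum_congr rfl; intro i _
        rw [← Finset.sum_add_distrib]
        apply Finset.sum_congr rfl; intro j _
        rw [← Finset.sum_add_distrib]
        apply Finset.sum_congr rfl; intro k _
        rw [← Finset.sum_add_distrib]
        apply Finset.sum_congr rfl; intro l _
        ring
      have swap : ∑ i : Fin n, ∑ j : Fin n, ∑ k : Fin n, ∑ l : Fin n,
          star (S i j) * (G i l * (S k l * G j k)) = A1 := by
        rw [hA1def]
        apply Finset.sum_congr rfl; intro i _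
        apply Finset.sum_congr rfl; intro j _
        rw [Finset.sum_comm]
        apply Finset.sum_congr rfl; intro k _
        apply Finset.sum_congr rfl; intro l _
        rw [hSsymm k l]
      rw [split, swap]; ring
    -- A1 as a trace
    have step4 : A1 = Matrix.trace (Sᴴ * (G * (S * Gᵀ))) := by
      rw [hA1def]
      simp only [Matrix.trace, Matrix.diag_apply, Matrix.mul_apply,
        Matrix.conjTranspose_apply, Matrix.transpose_apply, Finset.mul_sum]
      rw [Finset.sum_comm]
    -- positivity of the trace
    have hN : (Gᵀ).PosDef := hG.transpose
    have hNs : (Gᵀ).PosSemidef := hN.posSemidef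
    set C : Matrix (Fin n) (Fin n) ℂ := CFC.sqrt (Gᵀ) with hCdef
    have hC1 : C * C = Gᵀ := CFC.sqrt_mul_sqrt_self _ hNs.nonneg
    have hCherm : Cᴴ = C := (CFC.sqrt_nonneg (Gᵀ)).posSemidef.isHermitian
    have hCdet : IsUnit C.det := by
      have h1 : C.det * C.det = (Gᵀ).det := by rw [← Matrix.det_mul, hC1]
      have h2 : (Gᵀ).det ≠ 0 := hN.det_pos.ne'
      rw [← h1] at h2
      exact isUnit_iff_ne_zero.mpr (left_ne_zero_of_mul h2)
    set A : Matrix (Fin n) (Fin n) ℂ := S * C with hAdef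
    have hAne : A ≠ 0 := by
      intro h0
      apply hSne
      have := Matrix.mul_nonsing_inv_cancel_right C S hCdet
      rw [← this, ← hAdef, h0, Matrix.zero_mul]
    have step5 : Matrix.trace (Sᴴ * (G * (S * Gᵀ))) = Matrix.trace (Aᴴ * (G * A)) := by
      have e : Sᴴ * (G * (S * Gᵀ)) = (Sᴴ * (G * (S * C))) * C := by
        rw [← hC1]
        simp only [Matrix.mul_assoc]
      rw [e, Matrix.trace_mul_comm]
      congr 1
      rw [hAdef, Matrix.conjTranspose_mul, hCherm]
      simp only [Matrix.mul_assoc]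
    have hdiag : ∀ j, (Aᴴ * (G * A)) j j
        = star (fun i => A i j) ⬝ᵥ G *ᵥ (fun i => A i j) := by
      intro j
      simp [Matrix.mul_apply, Matrix.conjTranspose_apply, dotProduct, Matrix.mulVec,
        Finset.mul_sum]
    have htrpos : 0 < Matrix.trace (Aᴴ * (G * A)) := by
      obtain ⟨i0, j0, hij0⟩ : ∃ i j, A i j ≠ 0 := by
        by_contra hc
        push_neg at hc
        exact hAne (by ext i j; exact hc i j)
      have hcol : (fun i => A i j0) ≠ 0 := by
        intro hcz
        exact hij0 (congrFun hcz i0)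
      rw [Matrix.trace]
      have : (0 : ℂ) = ∑ _j : Fin n, 0 := by simp
      rw [this]
      apply Finset.sum_lt_sum
      · intro j _
        rw [Matrix.diag_apply, hdiag j]
        exact hG.posSemidef.dotProduct_mulVec_nonneg _
      · exact ⟨j0, Finset.mem_univ _, by
          rw [Matrix.diag_apply, hdiag j0]
          exact hG.dotProduct_mulVec_pos hcol⟩
    have hQF : star x ⬝ᵥ H *ᵥ x = (1 / 2 : ℂ) * Matrix.trace (Aᴴ * (G * A)) := by
      have h4 : (4 : ℂ) * (star x ⬝ᵥ H *ᵥ x) = 2 * Matrix.trace (Aᴴ * (G * A)) := by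
        rw [step1, ← step2, step3, step4, step5]
      linear_combination h4 / 4
    rw [hQF]
    have h12 : (0 : ℂ) < 1 / 2 := by
      rw [show (1 / 2 : ℂ) = ((1 / 2 : ℝ) : ℂ) by norm_num]
      exact_mod_cast one_half_pos
    exact mul_pos h12 htrpos
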